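/- Conditional independence collapses the conditioning variables in the conditional distribution: if X and Y are conditionally independent given Z, then for (law of (Y, Z))-almost every (y, z), the conditional distribution of X given (Y, Z) evaluated at (y, z) equals the conditional distribution of X given Z evaluated at z. -/

import Mathlib

open MeasureTheory ProbabilityTheory MeasurableSpace Set

/-- **Conditional independence collapses the conditioning variables in the conditional
distribution.**  If `X` and `Y` are conditionally independent given `Z` (i.e., given the
σ-algebra generated by `Z`), then for (law of `(Y, Z)`)-almost every `(y, z)`, the conditional
distribution of `X` given `(Y, Z)` at `(y, z)` equals the conditional distribution of `X`
given `Z` at `z`. -/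
theorem condDistrib_of_condIndepFun
    {Ω E F G : Type*} [MeasurableSpace Ω] [StandardBorelSpace Ω]
    [MeasurableSpace E] [StandardBorelSpace E] [Nonempty E]
    [MeasurableSpace F] [StandardBorelSpace F] [Nonempty F]
    [MeasurableSpace G] [StandardBorelSpace G] [Nonempty G]
    (μ : Measure Ω) [IsProbabilityMeasure μ]
    (X : Ω → E) (Y : Ω → F) (Z : Ω → G)
    (hX : Measurable X) (hY : Measurable Y) (hZ : Measurable Z)
    (hCI : CondIndepFun (MeasurableSpace.comap Z inferInstance)
      (measurable_iff_comap_le.mp hZ) X Y μ) :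
    ∀ᵐ p ∂(μ.map fun ω => (Y ω, Z ω)),
      condDistrib X (fun ω => (Y ω, Z ω)) μ p = condDistrib X Z μ p.2 := by
  have hm : MeasurableSpace.comap Z inferInstance ≤ ‹MeasurableSpace Ω› :=
    measurable_iff_comap_le.mp hZ
  have hYZ : Measurable fun ω => (Y ω, Z ω) := hY.prodMk hZ
  set κ : Kernel (F × G) E := (condDistrib X Z μ).comap Prod.snd measurable_snd with hκ_def
  have hCI' := (condIndepFun_iff_condExp_inter_preimage_eq_mul hX hY).mp hCI
  have hκeq : μ.map (fun ω => ((Y ω, Z ω), X ω)) = μ.map (fun ω => (Y ω, Z ω)) ⊗ₘ κ := by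
    have h1 : generateFrom (image2 (· ×ˢ ·) {s : Set F | MeasurableSet s}
        {t : Set G | MeasurableSet t}) = (inferInstance : MeasurableSpace (F × G)) :=
      generateFrom_prod
    have hgen : generateFrom (image2 (· ×ˢ ·)
        (image2 (· ×ˢ ·) {s : Set F | MeasurableSet s} {t : Set G | MeasurableSet t})
        {u : Set E | MeasurableSet u}) = (inferInstance : MeasurableSpace ((F × G) × E)) :=
      generateFrom_eq_prod h1 generateFrom_measurableSet
        (isCountablySpanning_measurableSet.prod isCountablySpanning_measurableSet)
        isCountablySpanning_measurableSet
    refine ext_of_generate_finite _ hgen.symm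
      ((isPiSystem_measurableSet.prod isPiSystem_measurableSet).prod isPiSystem_measurableSet)
      ?_ ?_
    · rintro _ ⟨_, ⟨a, ha, b, hb, rfl⟩, u, hu, rfl⟩
      simp only [Set.mem_setOf_eq] at ha hb hu
      -- compute both sides
      rw [Measure.map_apply (hYZ.prodMk hX) (((ha.prod hb).prod hu)),
        Measure.compProd_apply_prod (ha.prod hb) hu,
        setLIntegral_map (ha.prod hb) (Kernel.measurable_coe κ hu) hYZ]
      have hpre : (fun ω => ((Y ω, Z ω), X ω)) ⁻¹' ((a ×ˢ b) ×ˢ u)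
          = (Y ⁻¹' a ∩ Z ⁻¹' b) ∩ X ⁻¹' u := by
        ext ω; simp [Set.mem_prod, and_assoc]
      have hpre2 : (fun ω => (Y ω, Z ω)) ⁻¹' (a ×ˢ b) = Y ⁻¹' a ∩ Z ⁻¹' b := by
        ext ω; simp [Set.mem_prod]
      rw [hpre, hpre2]
      simp only [hκ_def, Kernel.comap_apply]
      -- reduce to a real-valued statement
      set q : Ω → ℝ := μ⟦X ⁻¹' u | MeasurableSpace.comap Z inferInstance⟧ with hq_def
      have hg_eq : (fun ω => (condDistrib X Z μ (Z ω) u).toReal) =ᵐ[μ] q :=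
        condDistrib_ae_eq_condExp hZ hX hu
      set ind : Ω → ℝ := (Y ⁻¹' a).indicator (fun _ => (1:ℝ)) with hind_def
      have hind : Integrable ind μ := (integrable_const (1:ℝ)).indicator (hY ha)
      have hqind : Integrable (q * ind) μ := by
        have h1 : Integrable (fun ω => ind ω * q ω) μ :=
          integrable_condExp.bdd_mul hind.aestronglyMeasurable
            (Filter.Eventually.of_forall fun ω => (by
              by_cases h : ω ∈ Y ⁻¹' a <;> simp [hind_def, h] : ‖ind ω‖ ≤ 1))
        exact h1.congr (Filter.Eventually.of_forall fun ω => mul_comm _ _)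
      have hZb : MeasurableSet[MeasurableSpace.comap Z inferInstance] (Z ⁻¹' b) := ⟨b, hb, rfl⟩
      have hZb0 : MeasurableSet (Z ⁻¹' b) := hZ hb
      set T : Set Ω := X ⁻¹' u ∩ Y ⁻¹' a with hT_def
      have hT : MeasurableSet T := (hX hu).inter (hY ha)
      have hTint : Integrable (T.indicator (fun _ => (1:ℝ))) μ :=
        (integrable_const (1:ℝ)).indicator hT
      have key : ∫ ω in Y ⁻¹' a ∩ Z ⁻¹' b, (condDistrib X Z μ (Z ω) u).toReal ∂μ
          = (μ ((Y ⁻¹' a ∩ Z ⁻¹' b) ∩ X ⁻¹' u)).toReal := by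
        calc ∫ ω in Y ⁻¹' a ∩ Z ⁻¹' b, (condDistrib X Z μ (Z ω) u).toReal ∂μ
            = ∫ ω in Y ⁻¹' a ∩ Z ⁻¹' b, q ω ∂μ :=
              setIntegral_congr_ae ((hY ha).inter hZb0) (hg_eq.mono fun ω h _ => h)
          _ = ∫ ω in Z ⁻¹' b, (Y ⁻¹' a).indicator q ω ∂μ := by
              rw [setIntegral_indicator (hY ha), Set.inter_comm]
          _ = ∫ ω in Z ⁻¹' b, (q * ind) ω ∂μ := by
              refine setIntegral_congr_fun hZb0 (fun ω _ => ?_)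
              by_cases h : ω ∈ Y ⁻¹' a <;> simp [hind_def, h]
          _ = ∫ ω in Z ⁻¹' b, (μ[q * ind | MeasurableSpace.comap Z inferInstance]) ω ∂μ :=
              (setIntegral_condExp hm hqind hZb).symm
          _ = ∫ ω in Z ⁻¹' b, (μ⟦T | MeasurableSpace.comap Z inferInstance⟧) ω ∂μ := by
              refine setIntegral_congr_ae hZb0 ?_
              have hpull := condExp_mul_of_stronglyMeasurable_left (m := MeasurableSpace.comap Z inferInstance) (μ := μ)
                stronglyMeasurable_condExp hqind hind
              filter_upwards [hpull, hCI' u a hu ha] with ω h1 h2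
              intro _
              rw [h1]
              simp only [Pi.mul_apply]
              rw [h2]
          _ = ∫ ω in Z ⁻¹' b, T.indicator (fun _ => (1:ℝ)) ω ∂μ :=
              setIntegral_condExp hm hTint hZb
          _ = ∫ ω in Z ⁻¹' b ∩ T, (1:ℝ) ∂μ := setIntegral_indicator hT
          _ = (μ (Z ⁻¹' b ∩ T)).toReal := by simp [measureReal_def]
          _ = (μ ((Y ⁻¹' a ∩ Z ⁻¹' b) ∩ X ⁻¹' u)).toReal := by
              have hset : Z ⁻¹' b ∩ T = (Y ⁻¹' a ∩ Z ⁻¹' b) ∩ X ⁻¹' u := by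
                ext ω; simp only [hT_def, Set.mem_inter_iff, Set.mem_preimage]; tauto
              rw [hset]
      -- convert to ℝ≥0∞
      have hint : Integrable (fun ω => (condDistrib X Z μ (Z ω) u).toReal)
          (μ.restrict (Y ⁻¹' a ∩ Z ⁻¹' b)) :=
        (integrable_toReal_condDistrib hZ.aemeasurable hu).restrict
      have hl : ∫⁻ ω in Y ⁻¹' a ∩ Z ⁻¹' b, condDistrib X Z μ (Z ω) u ∂μ
          = ENNReal.ofReal (∫ ω in Y ⁻¹' a ∩ Z ⁻¹' b,
              (condDistrib X Z μ (Z ω) u).toReal ∂μ) := by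
        rw [ofReal_integral_eq_lintegral_ofReal hint
          (Filter.Eventually.of_forall fun ω => ENNReal.toReal_nonneg)]
        refine lintegral_congr fun ω => ?_
        rw [ENNReal.ofReal_toReal (measure_ne_top _ _)]
      rw [hl, key, ENNReal.ofReal_toReal (measure_ne_top _ _)]
    · simp [Measure.map_apply (hYZ.prodMk hX) MeasurableSet.univ,
        Measure.compProd_apply_univ, Measure.map_apply hYZ MeasurableSet.univ]
  have h := condDistrib_ae_eq_of_measure_eq_compProd_of_measurable hYZ hX hκeq
  filter_upwards [h] with p hp
  rw [hp, hκ_def, Kernel.comap_apply]
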